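/- Let Γ be an abelian group of affine transformations of a finite-dimensional real vector space V. Then there exist a point õ ∈ V and linear subspaces V₀, V₁ ⊆ V with V = V₀ ⊕ V₁ such that the affine subspace U = õ + V₀ is Γ-invariant, the action of Γ on U is by affine maps with unipotent linear parts, and Γ acts linearly on V₁ (i.e., V₁ is invariant under all linear parts and the induced action on V₁ has no translation component). -/

import Mathlib

open Set

universe u

section Aux



lemma restrict_pow_apply' {W : Type u} [AddCommGroup W] [Module ℝ W]
    (g : Module.End ℝ W) {K : Submodule ℝ W} (h : ∀ x ∈ K, g x ∈ K) (n : ℕ)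
    (x : K) : (((g.restrict h) ^ n) x : W) = (g ^ n) (x : W) := by
  induction n generalizing x with
  | zero => simp
  | succ n ih =>
    rw [pow_succ, pow_succ, Module.End.mul_apply, Module.End.mul_apply, ih,
      LinearMap.restrict_coe_apply]

lemma fitting_aux : ∀ (n : ℕ) {W : Type u} [AddCommGroup W] [Module ℝ W]
    [FiniteDimensional ℝ W], Module.finrank ℝ W ≤ n →
    ∀ (S : Set (Module.End ℝ W)), (∀ f ∈ S, ∀ g ∈ S, Commute f g) →
    ∀ (V' : Submodule ℝ W), (∀ f ∈ S, ∀ x : W, f x - x ∈ V') →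
    ∃ W₀ W₁ : Submodule ℝ W, IsCompl W₀ W₁ ∧
      (∀ f ∈ S, ∀ x ∈ W₀, f x ∈ W₀) ∧
      (∀ f ∈ S, ∀ x ∈ W₁, f x ∈ W₁) ∧
      (∀ f ∈ S, ∃ m : ℕ, ∀ x ∈ W₀, ((f - 1) ^ m) x = 0) ∧
      W₁ ≤ V' := by
  intro n
  induction n with
  | zero =>
    intro W _ _ _ hrank S hcomm V' hV'
    have : Module.finrank ℝ W = 0 := Nat.le_zero.mp hrank
    have hsub : Subsingleton W := Module.finrank_zero_iff.mp this
    refine ⟨⊤, ⊥, isCompl_top_bot, fun f _ x _ => trivial, by simp,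
      fun f _ => ⟨1, fun x _ => ?_⟩, bot_le⟩
    have : x = 0 := Subsingleton.elim x 0
    simp [this]
  | succ n IH =>
    intro W _ _ _ hrank S hcomm V' hV'
    by_cases hnil : ∀ f ∈ S, ∃ m : ℕ, ∀ x : W, ((f - 1) ^ m) x = 0
    · exact ⟨⊤, ⊥, isCompl_top_bot, fun f _ x _ => trivial, by simp,
        fun f hf => (hnil f hf).imp fun m hm x _ => hm x, bot_le⟩
    push_neg at hnil
    obtain ⟨f, hfS, hf⟩ := hnil
    set g : Module.End ℝ W := f - 1 with hg
    obtain ⟨N, hN1, hcompl⟩ : ∃ N, 1 ≤ N ∧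
        IsCompl (LinearMap.ker (g ^ N)) (LinearMap.range (g ^ N)) := by
      obtain ⟨a, ha⟩ := Filter.eventually_atTop.mp g.eventually_isCompl_ker_pow_range_pow
      exact ⟨max a 1, le_max_right _ _, ha _ (le_max_left _ _)⟩
    set K := LinearMap.ker (g ^ N) with hKdef
    set R := LinearMap.range (g ^ N) with hRdef
    -- commuting with g ^ N
    have hcommg : ∀ u ∈ S, Commute u (g ^ N) := fun u hu =>
      ((hcomm u hu f hfS).sub_right (Commute.one_right u)).pow_right N
    have hK : ∀ u ∈ S, ∀ x ∈ K, u x ∈ K := by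
      intro u hu x hx
      have hx' : (g ^ N) x = 0 := hx
      have h := LinearMap.congr_fun (hcommg u hu).eq x
      simp only [Module.End.mul_apply] at h
      show (g ^ N) (u x) = 0
      rw [← h, hx', map_zero]
    have hR : ∀ u ∈ S, ∀ x ∈ R, u x ∈ R := by
      rintro u hu x ⟨y, rfl⟩
      refine ⟨u y, ?_⟩
      have h := LinearMap.congr_fun (hcommg u hu).eq y
      simp only [Module.End.mul_apply] at h
      exact h.symm
    have hRV' : R ≤ V' := by
      rintro x ⟨y, rfl⟩
      obtain ⟨N', rfl⟩ : ∃ N', N = N' + 1 := ⟨N - 1, (Nat.succ_pred_eq_of_pos hN1).symm⟩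
      rw [pow_succ']
      have : (g * g ^ N') y = f ((g ^ N') y) - (g ^ N') y := by
        simp [hg, Module.End.mul_apply, LinearMap.sub_apply]
      rw [this]
      exact hV' f hfS _
    have hKne : K ≠ ⊤ := by
      intro htop
      have hRbot : R = ⊥ := by
        have := hcompl.disjoint
        rw [htop] at this
        simpa using this.eq_bot
      have hz : g ^ N = 0 := LinearMap.range_eq_bot.mp hRbot
      obtain ⟨x, hx⟩ := hf N
      exact hx (by simp [hz])
    have hKlt : Module.finrank ℝ K < Module.finrank ℝ W := Submodule.finrank_lt hKne
    -- restricted family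
    set S' : Set (Module.End ℝ K) :=
      {h | ∃ u : Module.End ℝ W, ∃ hu : u ∈ S, h = u.restrict (hK u hu)} with hS'
    have hcomm' : ∀ a ∈ S', ∀ b ∈ S', Commute a b := by
      rintro a ⟨u, hu, rfl⟩ b ⟨v, hv, rfl⟩
      have h := LinearMap.congr_fun (hcomm u hu v hv).eq
      ext x
      simp only [Module.End.mul_apply, LinearMap.restrict_coe_apply]
      simpa only [Module.End.mul_apply] using h (x : W)
    have hV'' : ∀ a ∈ S', ∀ x : K, a x - x ∈ V'.comap K.subtype := by
      rintro a ⟨u, hu, rfl⟩ x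
      simpa using hV' u hu (x : W)
    obtain ⟨K₀, K₁, hKcompl, hK₀inv, hK₁inv, hKnil, hK₁V⟩ :=
      IH (by omega : Module.finrank ℝ K ≤ n) S' hcomm' (V'.comap K.subtype) hV''
    refine ⟨K₀.map K.subtype, K₁.map K.subtype ⊔ R, ?_, ?_, ?_, ?_, ?_⟩
    · constructor
      · rw [disjoint_iff]
        ext x
        simp only [Submodule.mem_inf, Submodule.mem_bot]
        constructor
        · rintro ⟨hx0, hx1⟩
          obtain ⟨a, ha, b, hb, rfl⟩ := Submodule.mem_sup.mp hx1
          have haK : a ∈ K := Submodule.map_subtype_le K K₁ ha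
          have habK : a + b ∈ K := Submodule.map_subtype_le K K₀ hx0
          have hbK : b ∈ K := by
            have h := K.sub_mem habK haK
            rwa [add_sub_cancel_left] at h
          have hb0 : b = 0 := by
            have : b ∈ K ⊓ R := ⟨hbK, hb⟩
            rw [hcompl.disjoint.eq_bot] at this
            simpa using this
          subst hb0
          rw [add_zero] at hx0 ⊢
          have hmem : a ∈ (K₀ ⊓ K₁).map K.subtype := by
            rw [Submodule.map_inf _ K.injective_subtype]
            exact ⟨hx0, ha⟩
          rw [hKcompl.disjoint.eq_bot, Submodule.map_bot] at hmem
          simpa using hmem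
        · rintro rfl
          exact ⟨Submodule.zero_mem _, Submodule.zero_mem _⟩
      · rw [codisjoint_iff, ← sup_assoc, ← Submodule.map_sup, hKcompl.codisjoint.eq_top,
          Submodule.map_top, Submodule.range_subtype]
        exact hcompl.codisjoint.eq_top
    · rintro u hu x ⟨y, hy, rfl⟩
      exact ⟨u.restrict (hK u hu) y, hK₀inv _ ⟨u, hu, rfl⟩ y hy, rfl⟩
    · intro u hu x hx
      obtain ⟨a, ha, b, hb, rfl⟩ := Submodule.mem_sup.mp hx
      rw [map_add]
      refine Submodule.add_mem_sup ?_ (hR u hu b hb)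
      obtain ⟨y, hy, rfl⟩ := ha
      exact ⟨u.restrict (hK u hu) y, hK₁inv _ ⟨u, hu, rfl⟩ y hy, rfl⟩
    · intro u hu
      obtain ⟨m, hm⟩ := hKnil _ ⟨u, hu, rfl⟩
      refine ⟨m, ?_⟩
      rintro x ⟨y, hy, rfl⟩
      have hrestr : u.restrict (hK u hu) - 1 = (u - 1).restrict
          (fun x hx => K.sub_mem (hK u hu x hx) hx) := by
        ext z
        simp [LinearMap.restrict_apply]
      have := hm y hy
      rw [hrestr] at this
      have h2 := restrict_pow_apply' (u - 1)
        (fun x hx => K.sub_mem (hK u hu x hx) hx) m y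
      rw [this] at h2
      simpa using h2.symm
    · exact sup_le (by rintro x ⟨y, hy, rfl⟩; exact hK₁V hy) hRV'
end Aux

section Linz

variable {V : Type u} [AddCommGroup V] [Module ℝ V]

/-- Linearization of an affine automorphism on `V × ℝ`. -/
def linz (γ : V ≃ᵃ[ℝ] V) : Module.End ℝ (V × ℝ) :=
  ((γ.linear.toLinearMap ∘ₗ LinearMap.fst ℝ V ℝ) +
    (LinearMap.snd ℝ V ℝ).smulRight (γ 0)).prod (LinearMap.snd ℝ V ℝ)

@[simp] lemma linz_apply (γ : V ≃ᵃ[ℝ] V) (p : V × ℝ) :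
    linz γ p = (γ.linear p.1 + p.2 • γ 0, p.2) := rfl

lemma affine_apply_eq (γ : V ≃ᵃ[ℝ] V) (x : V) : γ x = γ.linear x + γ 0 := by
  have h := γ.toAffineMap.map_vadd 0 x
  simpa [vadd_eq_add] using h

lemma linz_mul (γ ν : V ≃ᵃ[ℝ] V) : linz (γ * ν) = linz γ * linz ν := by
  apply LinearMap.ext
  rintro ⟨v, t⟩
  have h1 : (γ * ν) 0 = γ (ν 0) := rfl
  have h2 : ∀ x, (γ * ν).linear x = γ.linear (ν.linear x) := fun x => rfl
  simp only [Module.End.mul_apply, linz_apply, h1, h2]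
  refine Prod.ext ?_ rfl
  simp only [affine_apply_eq γ (ν 0), map_add, map_smul, smul_add]
  abel

lemma linz_sub_one_pow (γ : V ≃ᵃ[ℝ] V) (m : ℕ) (v : V) :
    ((linz γ - 1) ^ m) ((v, 0) : V × ℝ) =
      ((((γ.linear.toLinearMap - LinearMap.id : V →ₗ[ℝ] V)) ^ m) v, 0) := by
  induction m generalizing v with
  | zero => simp
  | succ m ih =>
    rw [pow_succ', pow_succ', Module.End.mul_apply, Module.End.mul_apply]
    have h : ∀ w : V, (linz γ - 1) ((w, 0) : V × ℝ) =
        (((γ.linear.toLinearMap - LinearMap.id : V →ₗ[ℝ] V)) w, 0) := by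
      intro w; simp [linz_apply, Prod.ext_iff]
    rw [ih v, h]

end Linz

/-- Lemma 3.11 (aflid): an abelian group `Γ` of affine transformations of a
finite-dimensional real vector space `V` admits a point `õ` and a decomposition
`V = V₀ ⊕ V₁` into linear subspaces, invariant under all linear parts, such that the
affine subspace `U = õ + V₀` is `Γ`-invariant with all linear parts unipotent on `V₀`,
and `Γ` acts linearly on `V₁` (the translation parts, taken with origin `õ`,
lie in `V₀`). -/
theorem abelian_affine_decomposition
    {V : Type*} [AddCommGroup V] [Module ℝ V] [FiniteDimensional ℝ V]
    (Γ : Subgroup (V ≃ᵃ[ℝ] V))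
    (hab : ∀ γ ∈ Γ, ∀ ν ∈ Γ, γ * ν = ν * γ) :
    ∃ (o : V) (V₀ V₁ : Submodule ℝ V), IsCompl V₀ V₁ ∧
      ∀ γ ∈ Γ,
        (∀ v ∈ V₀, γ.linear v ∈ V₀) ∧
        (∀ v ∈ V₁, γ.linear v ∈ V₁) ∧
        γ o - o ∈ V₀ ∧
        ∃ n : ℕ, ∀ v ∈ V₀, (((γ.linear.toLinearMap - LinearMap.id : V →ₗ[ℝ] V) ^ n) : V →ₗ[ℝ] V) v = 0 := by
  classical
  set S : Set (Module.End ℝ (V × ℝ)) := (fun γ : V ≃ᵃ[ℝ] V => linz γ) '' (Γ : Set _) with hSdef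
  have hcommS : ∀ a ∈ S, ∀ b ∈ S, Commute a b := by
    rintro a ⟨γ, hγ, rfl⟩ b ⟨ν, hν, rfl⟩
    show linz γ * linz ν = linz ν * linz γ
    rw [← linz_mul, ← linz_mul, hab γ hγ ν hν]
  set V' : Submodule ℝ (V × ℝ) := (⊤ : Submodule ℝ V).prod (⊥ : Submodule ℝ ℝ) with hV'def
  have hV' : ∀ a ∈ S, ∀ x : V × ℝ, a x - x ∈ V' := by
    rintro a ⟨γ, hγ, rfl⟩ x
    refine ⟨trivial, ?_⟩
    simp
  obtain ⟨W₀, W₁, hWcompl, hW₀, hW₁, hWnil, hW₁V⟩ :=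
    fitting_aux (Module.finrank ℝ (V × ℝ)) le_rfl S hcommS V' hV'
  have htop : ((0 : V), (1 : ℝ)) ∈ W₀ ⊔ W₁ := by
    rw [hWcompl.codisjoint.eq_top]; trivial
  obtain ⟨a, ha, b, hb, hab2⟩ := Submodule.mem_sup.mp htop
  have hb2 : b.2 = 0 := by simpa using (hW₁V hb).2
  have ha2 : a.2 = 1 := by
    have h := congrArg Prod.snd hab2
    simp only [Prod.snd_add, hb2, add_zero] at h
    exact h
  have haeq : a = ((a.1, 1) : V × ℝ) := by
    refine Prod.ext rfl ha2
  refine ⟨a.1, W₀.comap (LinearMap.inl ℝ V ℝ), W₁.comap (LinearMap.inl ℝ V ℝ), ?_, ?_⟩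
  · constructor
    · rw [disjoint_iff]
      ext v
      simp only [Submodule.mem_inf, Submodule.mem_comap, Submodule.mem_bot, LinearMap.inl_apply]
      constructor
      · rintro ⟨h0, h1⟩
        have : ((v, 0) : V × ℝ) ∈ W₀ ⊓ W₁ := ⟨h0, h1⟩
        rw [hWcompl.disjoint.eq_bot] at this
        simpa [Prod.ext_iff] using this
      · rintro rfl
        exact ⟨Submodule.zero_mem _, Submodule.zero_mem _⟩
    · rw [codisjoint_iff, Submodule.eq_top_iff']
      intro v
      have hmem : ((v, 0) : V × ℝ) ∈ W₀ ⊔ W₁ := by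
        rw [hWcompl.codisjoint.eq_top]; trivial
      obtain ⟨c, hc, d, hd, hcd⟩ := Submodule.mem_sup.mp hmem
      have hd2 : d.2 = 0 := by simpa using (hW₁V hd).2
      have hc2 : c.2 = 0 := by
        have h := congrArg Prod.snd hcd
        simp only [Prod.snd_add, hd2, add_zero] at h
        exact h
      refine Submodule.mem_sup.mpr ⟨c.1, ?_, d.1, ?_, ?_⟩
      · show ((c.1, 0) : V × ℝ) ∈ W₀
        rwa [show ((c.1, 0) : V × ℝ) = c from (Prod.ext rfl hc2.symm)]
      · show ((d.1, 0) : V × ℝ) ∈ W₁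
        rwa [show ((d.1, 0) : V × ℝ) = d from (Prod.ext rfl hd2.symm)]
      · have h := congrArg Prod.fst hcd
        simpa using h
  · intro γ hγ
    have hS : linz γ ∈ S := ⟨γ, hγ, rfl⟩
    have hlin0 : ∀ v : V, linz γ ((v, 0) : V × ℝ) = (γ.linear v, 0) := by
      intro v; simp
    refine ⟨?_, ?_, ?_, ?_⟩
    · intro v hv
      have := hW₀ _ hS _ hv
      rwa [show (LinearMap.inl ℝ V ℝ) v = ((v,0) : V × ℝ) from rfl, hlin0 v] at this
    · intro v hv
      have := hW₁ _ hS _ hv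
      rwa [show (LinearMap.inl ℝ V ℝ) v = ((v,0) : V × ℝ) from rfl, hlin0 v] at this
    · have hmem : linz γ a - a ∈ W₀ := Submodule.sub_mem _ (hW₀ _ hS a ha) ha
      have hcalc : linz γ a - a = ((γ a.1 - a.1, 0) : V × ℝ) := by
        rw [haeq]
        simp [affine_apply_eq γ a.1, Prod.ext_iff]
      rwa [hcalc] at hmem
    · obtain ⟨m, hm⟩ := hWnil _ hS
      refine ⟨m, fun v hv => ?_⟩
      have h := hm ((v, 0) : V × ℝ) hv
      rw [linz_sub_one_pow] at h
      simpa [Prod.ext_iff] using h
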